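/- Let n ≥ 2. There is no state h on the Brown algebra U_n^nc such that φ ⋆_AM h = h for every tracial state φ on U_n^nc. In particular, there exists neither an anti-monotone Haar state (a state h with φ ⋆_AM h = h = h ⋆_AM φ for all states φ) nor an anti-monotone Haar trace (a tracial state h with φ ⋆_AM h = h = h ⋆_AM φ for all tracial states φ) on U⟨n⟩. -/

import Mathlib

noncomputable section

/-- A state on a unital `⋆`-algebra over `ℂ`. -/
def IsState {A : Type} [Ring A] [Algebra ℂ A] [StarRing A]
    (φ : A →ₗ[ℂ] ℂ) : Prop :=
  φ 1 = 1 ∧ ∀ a : A, 0 ≤ (φ (star a * a)).re ∧ (φ (star a * a)).im = 0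

/-- A tracial state. -/
def IsTracialState {A : Type} [Ring A] [Algebra ℂ A] [StarRing A]
    (φ : A →ₗ[ℂ] ℂ) : Prop :=
  IsState φ ∧ ∀ a b : A, φ (a * b) = φ (b * a)

/-- The Brown algebra `U_n^nc`: a unital `⋆`-algebra generated by `n²` elements
`u i j` subject to the unitarity relations, together with its universal property. -/
structure BrownAlg (n : ℕ) where
  carrier : Type
  [ring : Ring carrier]
  [algebra : Algebra ℂ carrier]
  [starRing : StarRing carrier]
  [starModule : StarModule ℂ carrier]
  u : Fin n → Fin n → carrier
  rel_left : ∀ i j, (∑ k, star (u k i) * u k j) = if i = j then 1 else 0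
  rel_right : ∀ i j, (∑ k, u i k * star (u j k)) = if i = j then 1 else 0
  universal : ∀ (C : Type) [Ring C] [Algebra ℂ C] [StarRing C] [StarModule ℂ C]
      (v : Fin n → Fin n → C),
      (∀ i j, (∑ k, star (v k i) * v k j) = if i = j then 1 else 0) →
      (∀ i j, (∑ k, v i k * star (v j k)) = if i = j then 1 else 0) →
      ∃! f : carrier →⋆ₐ[ℂ] C, ∀ i j, f (u i j) = v i j

attribute [instance] BrownAlg.ring BrownAlg.algebra BrownAlg.starRing BrownAlg.starModule

/-- The free product (coproduct) of two unital `⋆`-algebras over `ℂ`,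
presented through its universal property. -/
structure FreeProd (A B : Type) [Ring A] [Algebra ℂ A] [StarRing A]
    [Ring B] [Algebra ℂ B] [StarRing B] where
  carrier : Type
  [ring : Ring carrier]
  [algebra : Algebra ℂ carrier]
  [starRing : StarRing carrier]
  [starModule : StarModule ℂ carrier]
  inl : A →⋆ₐ[ℂ] carrier
  inr : B →⋆ₐ[ℂ] carrier
  universal : ∀ (D : Type) [Ring D] [Algebra ℂ D] [StarRing D] [StarModule ℂ D]
      (f : A →⋆ₐ[ℂ] D) (g : B →⋆ₐ[ℂ] D),
      ∃! h : carrier →⋆ₐ[ℂ] D, (∀ a, h (inl a) = f a) ∧ (∀ b, h (inr b) = g b)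

attribute [instance] FreeProd.ring FreeProd.algebra FreeProd.starRing FreeProd.starModule

namespace FreeProd

variable {A B : Type} [Ring A] [Algebra ℂ A] [StarRing A]
    [Ring B] [Algebra ℂ B] [StarRing B]

/-- The canonical embedding of a tagged element into the free product. -/
def embed (F : FreeProd A B) : A ⊕ B → F.carrier :=
  Sum.elim (fun a => F.inl a) (fun b => F.inr b)

/-- `Ψ` is the free product functional of `φ` and `ψ` on the free product `F`:
it is unital, restricts to `φ` and `ψ` on the two legs, and vanishes on alternating
products of centered elements. -/
def IsFreeProdFunctional (F : FreeProd A B) (φ : A →ₗ[ℂ] ℂ) (ψ : B →ₗ[ℂ] ℂ)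
    (Ψ : F.carrier →ₗ[ℂ] ℂ) : Prop :=
  Ψ 1 = 1 ∧ (∀ a, Ψ (F.inl a) = φ a) ∧ (∀ b, Ψ (F.inr b) = ψ b) ∧
  ∀ l : List (A ⊕ B), l ≠ [] →
    l.Chain' (fun x y => x.isLeft ≠ y.isLeft) →
    (∀ x ∈ l, Sum.elim (fun a => φ a = 0) (fun b => ψ b = 0) x) →
    Ψ ((l.map F.embed).prod) = 0

end FreeProd

section ProdFunctionals

variable {A : Type} [Ring A] [Algebra ℂ A] [StarRing A]

/-- `Ψ` is the tensor (tensor-independent) product functional of `φ` and `ψ`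
relative to the counit `δc`. -/
def IsTensorProdFunctional (F : FreeProd A A) (δc : A →⋆ₐ[ℂ] ℂ)
    (φ ψ : A →ₗ[ℂ] ℂ) (Ψ : F.carrier →ₗ[ℂ] ℂ) : Prop :=
  Ψ 1 = 1 ∧
  ∀ l : List (A ⊕ A), l ≠ [] →
    l.Chain' (fun x y => x.isLeft ≠ y.isLeft) →
    (∀ x ∈ l, Sum.elim (fun a => δc a = 0) (fun b => δc b = 0) x) →
    Ψ ((l.map F.embed).prod) =
      φ (l.filterMap Sum.getLeft?).prod * ψ (l.filterMap Sum.getRight?).prod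

/-- `Ψ` is the boolean product functional of `φ` and `ψ` relative to the counit `δc`. -/
def IsBooleanProdFunctional (F : FreeProd A A) (δc : A →⋆ₐ[ℂ] ℂ)
    (φ ψ : A →ₗ[ℂ] ℂ) (Ψ : F.carrier →ₗ[ℂ] ℂ) : Prop :=
  Ψ 1 = 1 ∧
  ∀ l : List (A ⊕ A), l ≠ [] →
    l.Chain' (fun x y => x.isLeft ≠ y.isLeft) →
    (∀ x ∈ l, Sum.elim (fun a => δc a = 0) (fun b => δc b = 0) x) →
    Ψ ((l.map F.embed).prod) = (l.map (Sum.elim (fun a => φ a) (fun b => ψ b))).prod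

/-- `Ψ` is the monotone product functional of `φ` and `ψ` relative to the counit `δc`. -/
def IsMonotoneProdFunctional (F : FreeProd A A) (δc : A →⋆ₐ[ℂ] ℂ)
    (φ ψ : A →ₗ[ℂ] ℂ) (Ψ : F.carrier →ₗ[ℂ] ℂ) : Prop :=
  Ψ 1 = 1 ∧
  ∀ l : List (A ⊕ A), l ≠ [] →
    l.Chain' (fun x y => x.isLeft ≠ y.isLeft) →
    (∀ x ∈ l, Sum.elim (fun a => δc a = 0) (fun b => δc b = 0) x) →
    Ψ ((l.map F.embed).prod) =
      φ (l.filterMap Sum.getLeft?).prod * ((l.filterMap Sum.getRight?).map (fun b => ψ b)).prod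

/-- `Ψ` is the anti-monotone product functional of `φ` and `ψ` relative to the counit `δc`. -/
def IsAntiMonotoneProdFunctional (F : FreeProd A A) (δc : A →⋆ₐ[ℂ] ℂ)
    (φ ψ : A →ₗ[ℂ] ℂ) (Ψ : F.carrier →ₗ[ℂ] ℂ) : Prop :=
  Ψ 1 = 1 ∧
  ∀ l : List (A ⊕ A), l ≠ [] →
    l.Chain' (fun x y => x.isLeft ≠ y.isLeft) →
    (∀ x ∈ l, Sum.elim (fun a => δc a = 0) (fun b => δc b = 0) x) →
    Ψ ((l.map F.embed).prod) =
      ((l.filterMap Sum.getLeft?).map (fun a => φ a)).prod * ψ (l.filterMap Sum.getRight?).prod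

end ProdFunctionals

namespace BrownAlg

variable {n : ℕ}

/-- `Δ` is the coproduct of the unitary dual group `U⟨n⟩`. -/
def IsCoprod (U : BrownAlg n) (F : FreeProd U.carrier U.carrier)
    (Δ : U.carrier →⋆ₐ[ℂ] F.carrier) : Prop :=
  ∀ i j, Δ (U.u i j) = ∑ k, F.inl (U.u i k) * F.inr (U.u k j)

/-- `δc` is the counit of the unitary dual group `U⟨n⟩`. -/
def IsCounit (U : BrownAlg n) (δc : U.carrier →⋆ₐ[ℂ] ℂ) : Prop :=
  ∀ i j, δc (U.u i j) = if i = j then 1 else 0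

/-- `Σ` is the antipode of the unitary dual group `U⟨n⟩`. -/
def IsAntipode (U : BrownAlg n) (Sa : U.carrier →⋆ₐ[ℂ] U.carrier) : Prop :=
  ∀ i j, Sa (U.u i j) = star (U.u j i)

/-- `χ = φ ⋆_F ψ`, the free convolution of the states `φ` and `ψ` on `U⟨n⟩`. -/
def FreeConv (U : BrownAlg n) (F : FreeProd U.carrier U.carrier)
    (Δ : U.carrier →⋆ₐ[ℂ] F.carrier) (φ ψ χ : U.carrier →ₗ[ℂ] ℂ) : Prop :=
  ∃ Ψ : F.carrier →ₗ[ℂ] ℂ, F.IsFreeProdFunctional φ ψ Ψ ∧ ∀ a, Ψ (Δ a) = χ a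

/-- `χ = φ ⋆_T ψ`, the tensor convolution of the states `φ` and `ψ` on `U⟨n⟩`. -/
def TensorConv (U : BrownAlg n) (F : FreeProd U.carrier U.carrier)
    (Δ : U.carrier →⋆ₐ[ℂ] F.carrier) (δc : U.carrier →⋆ₐ[ℂ] ℂ)
    (φ ψ χ : U.carrier →ₗ[ℂ] ℂ) : Prop :=
  ∃ Ψ : F.carrier →ₗ[ℂ] ℂ, IsTensorProdFunctional F δc φ ψ Ψ ∧ ∀ a, Ψ (Δ a) = χ a

/-- `χ = φ ⋆_B ψ`, the boolean convolution. -/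
def BooleanConv (U : BrownAlg n) (F : FreeProd U.carrier U.carrier)
    (Δ : U.carrier →⋆ₐ[ℂ] F.carrier) (δc : U.carrier →⋆ₐ[ℂ] ℂ)
    (φ ψ χ : U.carrier →ₗ[ℂ] ℂ) : Prop :=
  ∃ Ψ : F.carrier →ₗ[ℂ] ℂ, IsBooleanProdFunctional F δc φ ψ Ψ ∧ ∀ a, Ψ (Δ a) = χ a

/-- `χ = φ ⋆_M ψ`, the monotone convolution. -/
def MonotoneConv (U : BrownAlg n) (F : FreeProd U.carrier U.carrier)
    (Δ : U.carrier →⋆ₐ[ℂ] F.carrier) (δc : U.carrier →⋆ₐ[ℂ] ℂ)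
    (φ ψ χ : U.carrier →ₗ[ℂ] ℂ) : Prop :=
  ∃ Ψ : F.carrier →ₗ[ℂ] ℂ, IsMonotoneProdFunctional F δc φ ψ Ψ ∧ ∀ a, Ψ (Δ a) = χ a

/-- `χ = φ ⋆_AM ψ`, the anti-monotone convolution. -/
def AntiMonotoneConv (U : BrownAlg n) (F : FreeProd U.carrier U.carrier)
    (Δ : U.carrier →⋆ₐ[ℂ] F.carrier) (δc : U.carrier →⋆ₐ[ℂ] ℂ)
    (φ ψ χ : U.carrier →ₗ[ℂ] ℂ) : Prop :=
  ∃ Ψ : F.carrier →ₗ[ℂ] ℂ, IsAntiMonotoneProdFunctional F δc φ ψ Ψ ∧ ∀ a, Ψ (Δ a) = χ a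

end BrownAlg

section AMaux

variable {A : Type} [Ring A] [Algebra ℂ A] [StarRing A]
variable (F : FreeProd A A) (δc : A →⋆ₐ[ℂ] ℂ) (φ ψ : A →ₗ[ℂ] ℂ) (Ψ : F.carrier →ₗ[ℂ] ℂ)
variable (hΨ : IsAntiMonotoneProdFunctional F δc φ ψ Ψ) (hψ1 : ψ 1 = 1)

include hΨ

lemma psi_l (a : A) (ha : δc a = 0) : Ψ (F.inl a) = φ a * ψ 1 := by
  have := hΨ.2 [Sum.inl a] (by simp) (by simp [List.Chain']) (by simp [ha])
  simpa [FreeProd.embed, List.filterMap_cons] using this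

lemma psi_r (b : A) (hb : δc b = 0) : Ψ (F.inr b) = ψ b := by
  have := hΨ.2 [Sum.inr b] (by simp) (by simp [List.Chain']) (by simp [hb])
  simpa [FreeProd.embed, List.filterMap_cons] using this

lemma psi_lr (a b : A) (ha : δc a = 0) (hb : δc b = 0) :
    Ψ (F.inl a * F.inr b) = φ a * ψ b := by
  have := hΨ.2 [Sum.inl a, Sum.inr b] (by simp) (by simp [List.Chain']) (by simp [ha, hb])
  simpa [FreeProd.embed, List.filterMap_cons] using this

lemma psi_rl (a b : A) (ha : δc a = 0) (hb : δc b = 0) :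
    Ψ (F.inr b * F.inl a) = φ a * ψ b := by
  have := hΨ.2 [Sum.inr b, Sum.inl a] (by simp) (by simp [List.Chain']) (by simp [ha, hb])
  simpa [FreeProd.embed, List.filterMap_cons, mul_comm] using this

lemma psi_lrl (a b c : A) (ha : δc a = 0) (hb : δc b = 0) (hc : δc c = 0) :
    Ψ (F.inl a * F.inr b * F.inl c) = φ a * φ c * ψ b := by
  have := hΨ.2 [Sum.inl a, Sum.inr b, Sum.inl c] (by simp) (by simp [List.Chain']) (by simp [ha, hb, hc])
  simp only [FreeProd.embed, List.map_cons, List.map_nil, List.prod_cons, List.prod_nil,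
    List.filterMap_cons, List.filterMap_nil, Sum.elim_inl, Sum.elim_inr] at this
  simp only [Sum.getLeft?, Sum.getRight?, mul_one] at this
  rw [mul_assoc, this]; simp [mul_comm]


lemma psi_ll (a c : A) (hac : δc (a * c) = 0) :
    Ψ (F.inl a * F.inl c) = φ (a * c) * ψ 1 := by
  rw [← map_mul]; exact psi_l F δc φ ψ Ψ hΨ _ hac

omit hΨ in
lemma center_eq (a : A) : F.inl a = F.inl (a - δc a • 1) + δc a • 1 := by
  simp [map_sub, map_smul]

omit hΨ in
lemma center_eq_r (a : A) : F.inr a = F.inr (a - δc a • 1) + δc a • 1 := by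
  simp [map_sub, map_smul]

omit hΨ in
lemma center_delta (a : A) : δc (a - δc a • 1) = 0 := by
  simp [map_sub, map_smul]

lemma psi3 (hφ1 : φ 1 = 1) (hψ1 : ψ 1 = 1) (X Y Z : A) :
    Ψ (F.inl X * F.inr Y * F.inl Z)
      = (ψ Y - δc Y) * (φ X * φ Z) + δc Y * φ (X * Z) := by
  set x := δc X with hx
  set y := δc Y with hy
  set z := δc Z with hz
  set X' := X - x • (1 : A) with hX'
  set Y' := Y - y • (1 : A) with hY'
  set Z' := Z - z • (1 : A) with hZ'
  have dX : δc X' = 0 := center_delta δc X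
  have dY : δc Y' = 0 := center_delta δc Y
  have dZ : δc Z' = 0 := center_delta δc Z
  have dXZ : δc (X' * Z') = 0 := by rw [map_mul, dX, zero_mul]
  have expand : F.inl X * F.inr Y * F.inl Z =
      F.inl X' * F.inr Y' * F.inl Z' + z • (F.inl X' * F.inr Y')
      + y • (F.inl X' * F.inl Z') + (y*z) • F.inl X'
      + x • (F.inr Y' * F.inl Z') + (x*z) • F.inr Y' + (x*y) • F.inl Z'
      + (x*y*z) • (1 : F.carrier) := by
    rw [center_eq F δc X, center_eq_r F δc Y, center_eq F δc Z]
    simp only [mul_add, add_mul, smul_mul_assoc, mul_smul_comm, one_mul, mul_one, smul_smul]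
    module
  have pX : φ X' = φ X - x := by simp [hX', map_sub, map_smul, hφ1]
  have pZ : φ Z' = φ Z - z := by simp [hZ', map_sub, map_smul, hφ1]
  have pY : ψ Y' = ψ Y - y := by simp [hY', map_sub, map_smul, hψ1]
  have pXZ : φ (X' * Z') = φ (X * Z) - z * φ X - x * φ Z + x * z := by
    have : X' * Z' = X * Z - z • X - x • Z + (x*z) • (1 : A) := by
      rw [hX', hZ']
      simp only [mul_sub, sub_mul, smul_mul_assoc, mul_smul_comm, one_mul, mul_one, smul_smul]
      module
    rw [this]; simp [map_sub, map_add, map_smul, hφ1]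
  rw [expand]
  simp only [map_add, map_smul]
  rw [psi_lrl F δc φ ψ Ψ hΨ X' Y' Z' dX dY dZ,
    psi_lr F δc φ ψ Ψ hΨ X' Y' dX dY,
    psi_ll F δc φ ψ Ψ hΨ X' Z' dXZ,
    psi_l F δc φ ψ Ψ hΨ X' dX,
    psi_rl F δc φ ψ Ψ hΨ Z' Y' dZ dY,
    psi_r F δc φ ψ Ψ hΨ Y' dY,
    psi_l F δc φ ψ Ψ hΨ Z' dZ,
    hΨ.1, pX, pZ, pY, pXZ, hψ1]
  push_cast [smul_eq_mul]
  ring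
end AMaux
section Rep

open Matrix

/-- the sign matrix -/
def wMat : Matrix (Fin 2) (Fin 2) ℂ := !![1, 0; 0, -1]

lemma wMat_star : star wMat = wMat := by
  show wMat.conjTranspose = wMat
  ext i j
  fin_cases i <;> fin_cases j <;> simp [wMat, conjTranspose_apply]

lemma wMat_mul_self : wMat * wMat = 1 := by
  ext i j
  fin_cases i <;> fin_cases j <;>
    simp [wMat, Matrix.mul_apply, Fin.sum_univ_two, Matrix.one_apply]

lemma wMat_trace : Matrix.trace wMat = 0 := by
  simp [wMat, Matrix.trace, Matrix.diag, Fin.sum_univ_two]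

lemma trace_star_mul_self (Ag : Matrix (Fin 2) (Fin 2) ℂ) :
    Matrix.trace (star Ag * Ag) = ((∑ i, ∑ j, Complex.normSq (Ag j i) : ℝ) : ℂ) := by
  rw [Matrix.trace]
  push_cast
  apply Finset.sum_congr rfl
  intro i _
  rw [Matrix.diag_apply, Matrix.mul_apply]
  apply Finset.sum_congr rfl
  intro j _
  rw [show (star Ag) i j = (starRingEnd ℂ) (Ag j i) from rfl,
    ← Complex.normSq_eq_conj_mul_self]

variable {n : ℕ} (U : BrownAlg n)

/-- Tracial states with vanishing first moments from permutation × sign-matrix reps. -/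
lemma perm_state (σ : Equiv.Perm (Fin n)) :
    ∃ φ : U.carrier →ₗ[ℂ] ℂ, IsTracialState φ ∧
      (∀ i j, φ (U.u i j) = 0) ∧ (∀ i j, φ (star (U.u i j)) = 0) ∧
      (∀ i j k l, φ (U.u i j * star (U.u k l)) =
        (if i = σ j then 1 else 0) * (if k = σ l then 1 else 0)) := by
  classical
  set V : Fin n → Fin n → ℂ := fun i j => if i = σ j then 1 else 0 with hV
  have hVstar : ∀ i j, star (V i j) = V i j := by
    intro i j; simp [hV, apply_ite (starRingEnd ℂ)]
  set v : Fin n → Fin n → Matrix (Fin 2) (Fin 2) ℂ := fun i j => V i j • wMat with hv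
  have hstarv : ∀ i j, star (v i j) = V i j • wMat := by
    intro i j; rw [hv]; simp only [star_smul, wMat_star, hVstar]
  have hmul : ∀ a b : ℂ, (a • wMat) * (b • wMat) = (a * b) • (1 : Matrix (Fin 2) (Fin 2) ℂ) := by
    intro a b
    rw [smul_mul_assoc, mul_smul_comm, smul_smul, wMat_mul_self]
  have hrel1 : ∀ i j, (∑ k, star (v k i) * v k j) = if i = j then 1 else 0 := by
    intro i j
    have h1 : ∀ k, star (v k i) * v k j
        = ((if k = σ i then 1 else 0) * (if k = σ j then 1 else 0) : ℂ)
          • (1 : Matrix (Fin 2) (Fin 2) ℂ) := by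
      intro k; rw [hstarv, hv]; exact hmul _ _
    simp only [h1]
    rw [← Finset.sum_smul]
    have h2 : (∑ k, (if k = σ i then 1 else 0) * (if k = σ j then 1 else 0) : ℂ)
        = if i = j then 1 else 0 := by
      simp only [ite_mul, one_mul, zero_mul]
      rw [Finset.sum_ite_eq' Finset.univ (σ i)]
      simp [EmbeddingLike.apply_eq_iff_eq, eq_comm]
    rw [h2]
    split <;> simp
  have hrel2 : ∀ i j, (∑ k, v i k * star (v j k)) = if i = j then 1 else 0 := by
    intro i j
    have h1 : ∀ k, v i k * star (v j k)
        = ((if i = σ k then 1 else 0) * (if j = σ k then 1 else 0) : ℂ)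
          • (1 : Matrix (Fin 2) (Fin 2) ℂ) := by
      intro k; rw [hstarv, hv]; exact hmul _ _
    simp only [h1]
    rw [← Finset.sum_smul]
    have h2 : (∑ k, (if i = σ k then 1 else 0) * (if j = σ k then 1 else 0) : ℂ)
        = if i = j then 1 else 0 := by
      rw [← Equiv.sum_comp σ.symm
        (fun k => ((if i = σ k then 1 else 0) * (if j = σ k then 1 else 0) : ℂ))]
      simp only [Equiv.apply_symm_apply, ite_mul, one_mul, zero_mul]
      rw [Finset.sum_ite_eq Finset.univ i]
      simp [eq_comm]
    rw [h2]
    split <;> simp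
  obtain ⟨f, hf, -⟩ := U.universal (Matrix (Fin 2) (Fin 2) ℂ) v hrel1 hrel2
  set φ : U.carrier →ₗ[ℂ] ℂ :=
    (2⁻¹ : ℂ) • ((Matrix.traceLinearMap (Fin 2) ℂ ℂ).comp f.toAlgHom.toLinearMap) with hφ
  have hφa : ∀ a : U.carrier, φ a = 2⁻¹ * Matrix.trace (f a) := fun a => rfl
  refine ⟨φ, ⟨⟨?_, ?_⟩, ?_⟩, ?_, ?_, ?_⟩
  · rw [hφa, _root_.map_one, Matrix.trace_one]
    norm_num
  · intro a
    have : φ (star a * a) = ((2⁻¹ * ∑ i, ∑ j, Complex.normSq (f a j i) : ℝ) : ℂ) := by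
      rw [hφa, _root_.map_mul, StarHomClass.map_star, trace_star_mul_self]
      push_cast
      ring
    rw [this]
    constructor
    · rw [Complex.ofReal_re]
      apply mul_nonneg (by norm_num)
      apply Finset.sum_nonneg
      intro i _
      apply Finset.sum_nonneg
      intro j _
      exact Complex.normSq_nonneg _
    · rw [Complex.ofReal_im]
  · intro a b
    rw [hφa, hφa, _root_.map_mul, _root_.map_mul, Matrix.trace_mul_comm]
  · intro i j
    rw [hφa, hf, hv]
    simp only [_root_.map_smul, Matrix.trace_smul, wMat_trace]
    simp
  · intro i j
    rw [hφa, StarHomClass.map_star, hf]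
    rw [show star (v i j) = V i j • wMat from hstarv i j]
    simp only [Matrix.trace_smul, wMat_trace]
    simp
  · intro i j k l
    rw [hφa, _root_.map_mul, StarHomClass.map_star, hf, hf,
      show star (v k l) = V k l • wMat from hstarv k l, hv]
    simp only []
    rw [hmul, Matrix.trace_smul, Matrix.trace_one]
    simp only [hV]
    ring_nf
    simp [Finset.card_univ]

end Rep
section Main

variable {n : ℕ}

lemma master (U : BrownAlg n) (F : FreeProd U.carrier U.carrier)
    (Δ : U.carrier →⋆ₐ[ℂ] F.carrier) (hΔ : U.IsCoprod F Δ)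
    (δc : U.carrier →⋆ₐ[ℂ] ℂ) (hδ : U.IsCounit δc)
    (i0 : Fin n)
    (φ h : U.carrier →ₗ[ℂ] ℂ) (hφ1 : φ 1 = 1) (hh1 : h 1 = 1)
    (hφu : ∀ i j, φ (U.u i j) = 0) (hφus : ∀ i j, φ (star (U.u i j)) = 0)
    (Ψ : F.carrier →ₗ[ℂ] ℂ) (hΨ : IsAntiMonotoneProdFunctional F δc φ h Ψ)
    (heval : ∀ a, Ψ (Δ a) = h a) :
    h (U.u i0 i0 * star (U.u i0 i0)) = φ (U.u i0 i0 * star (U.u i0 i0)) := by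
  classical
  rw [← heval]
  have hΔexp : Δ (U.u i0 i0 * star (U.u i0 i0)) =
      ∑ k, ∑ l, F.inl (U.u i0 k) * F.inr (U.u k i0 * star (U.u l i0))
        * F.inl (star (U.u i0 l)) := by
    rw [_root_.map_mul, StarHomClass.map_star, hΔ i0 i0, star_sum, Finset.sum_mul_sum]
    apply Finset.sum_congr rfl
    intro k _
    apply Finset.sum_congr rfl
    intro l _
    rw [star_mul, ← StarHomClass.map_star, ← StarHomClass.map_star (f := F.inl),
      _root_.map_mul]
    simp only [mul_assoc]
  rw [hΔexp]
  simp only [map_sum]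
  have hterm : ∀ k l, Ψ (F.inl (U.u i0 k) * F.inr (U.u k i0 * star (U.u l i0))
      * F.inl (star (U.u i0 l)))
      = (if k = i0 then 1 else 0) * (if l = i0 then 1 else 0)
        * φ (U.u i0 k * star (U.u i0 l)) := by
    intro k l
    rw [psi3 F δc φ h Ψ hΨ hφ1 hh1]
    rw [hφu i0 k, hφus i0 l]
    have hdY : δc (U.u k i0 * star (U.u l i0))
        = (if k = i0 then 1 else 0) * (if l = i0 then 1 else 0) := by
      rw [_root_.map_mul, StarHomClass.map_star, hδ k i0, hδ l i0]
      congr 1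
      simp [apply_ite (star : ℂ → ℂ)]
    rw [hdY]
    ring
  simp only [hterm]
  simp [ite_mul, zero_mul, one_mul, Finset.sum_ite_eq']

end Main
/-- For `n ≥ 2` there is no state `h` on the Brown algebra with
`φ ⋆_AM h = h` for every tracial state `φ`; in particular there is neither an
anti-monotone Haar state nor an anti-monotone Haar trace on `U⟨n⟩`. -/
theorem no_antimonotone_haar_state (n : ℕ) (hn : 2 ≤ n) (U : BrownAlg n)
    (F : FreeProd U.carrier U.carrier) (Δ : U.carrier →⋆ₐ[ℂ] F.carrier)
    (hΔ : U.IsCoprod F Δ) (δc : U.carrier →⋆ₐ[ℂ] ℂ) (hδ : U.IsCounit δc) :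
    (¬ ∃ h : U.carrier →ₗ[ℂ] ℂ, IsState h ∧
        ∀ φ : U.carrier →ₗ[ℂ] ℂ, IsTracialState φ → U.AntiMonotoneConv F Δ δc φ h h) ∧
    (¬ ∃ h : U.carrier →ₗ[ℂ] ℂ, IsState h ∧
        ∀ φ : U.carrier →ₗ[ℂ] ℂ, IsState φ →
          U.AntiMonotoneConv F Δ δc φ h h ∧ U.AntiMonotoneConv F Δ δc h φ h) ∧
    (¬ ∃ h : U.carrier →ₗ[ℂ] ℂ, IsTracialState h ∧
        ∀ φ : U.carrier →ₗ[ℂ] ℂ, IsTracialState φ →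
          U.AntiMonotoneConv F Δ δc φ h h ∧ U.AntiMonotoneConv F Δ δc h φ h) := by
  have key : ∀ h : U.carrier →ₗ[ℂ] ℂ, IsState h →
      (∀ φ : U.carrier →ₗ[ℂ] ℂ, IsTracialState φ → U.AntiMonotoneConv F Δ δc φ h h) →
      False := by
    intro h hstate hconv
    have h0 : (0 : ℕ) < n := by omega
    have h1 : (1 : ℕ) < n := by omega
    set i0 : Fin n := ⟨0, h0⟩ with hi0
    set i1 : Fin n := ⟨1, h1⟩ with hi1
    have hne : i0 ≠ i1 := by simp [hi0, hi1, Fin.ext_iff]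
    obtain ⟨φ1, hts1, hu1, hus1, hm1⟩ := perm_state U (1 : Equiv.Perm (Fin n))
    obtain ⟨Ψ1, hΨ1, heval1⟩ := hconv φ1 hts1
    have e1 : h (U.u i0 i0 * star (U.u i0 i0)) = φ1 (U.u i0 i0 * star (U.u i0 i0)) :=
      master U F Δ hΔ δc hδ i0 φ1 h hts1.1.1 hstate.1 hu1 hus1 Ψ1 hΨ1 heval1
    obtain ⟨φ2, hts2, hu2, hus2, hm2⟩ := perm_state U (Equiv.swap i0 i1)
    obtain ⟨Ψ2, hΨ2, heval2⟩ := hconv φ2 hts2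
    have e2 : h (U.u i0 i0 * star (U.u i0 i0)) = φ2 (U.u i0 i0 * star (U.u i0 i0)) :=
      master U F Δ hΔ δc hδ i0 φ2 h hts2.1.1 hstate.1 hu2 hus2 Ψ2 hΨ2 heval2
    rw [hm1 i0 i0 i0 i0] at e1
    rw [hm2 i0 i0 i0 i0] at e2
    have hsw : Equiv.swap i0 i1 i0 = i1 := Equiv.swap_apply_left i0 i1
    rw [hsw] at e2
    simp only [Equiv.Perm.one_apply, if_pos rfl, one_mul] at e1
    rw [if_neg hne] at e2
    rw [e1] at e2
    simp at e2
  refine ⟨?_, ?_, ?_⟩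
  · rintro ⟨h, hs, hc⟩
    exact key h hs hc
  · rintro ⟨h, hs, hc⟩
    exact key h hs fun φ hφ => (hc φ hφ.1).1
  · rintro ⟨h, hs, hc⟩
    exact key h hs.1 fun φ hφ => (hc φ hφ).1
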